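/- arXiv:0802.1153 — 2 statements merged into one kernel-verified Lean document; each statement's English description precedes it below -/
import Mathlib

section
/- Two polynomials f and g in the free noncommutative algebra ℝ⟨X,Y⟩ are cyclically equivalent (i.e., for every word v, the sums of coefficients of f and g over words cyclically equivalent to v agree) if and only if f − g is a sum of commutators [p,q] = pq − qp with p, q ∈ ℝ⟨X,Y⟩. -/
open scoped Classical

/-- `ℝ⟨X,Y⟩`, the free noncommutative ℝ-algebra on two variables, realized as the
monoid algebra of the free monoid on two generators. -/
noncomputable abbrev NCPoly := MonoidAlgebra ℝ (FreeMonoid Bool)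

/-- Cyclic equivalence of words: `w` arises from `v` by exchanging two factors. -/
def CycEqWord (v w : FreeMonoid Bool) : Prop :=
  ∃ u₁ u₂ : FreeMonoid Bool, v = u₁ * u₂ ∧ w = u₂ * u₁

lemma cycEq_iff_isRotated (v w : FreeMonoid Bool) :
    CycEqWord v w ↔ FreeMonoid.toList v ~r FreeMonoid.toList w := by
  constructor
  · rintro ⟨a, b, rfl, rfl⟩
    exact List.isRotated_append
  · rintro ⟨n, h⟩
    refine ⟨FreeMonoid.ofList ((FreeMonoid.toList v).take (n % (FreeMonoid.toList v).length)),
      FreeMonoid.ofList ((FreeMonoid.toList v).drop (n % (FreeMonoid.toList v).length)), ?_, ?_⟩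
    · exact congrArg FreeMonoid.ofList (List.take_append_drop _ _).symm
    · apply FreeMonoid.toList.injective
      rw [← h, List.rotate_eq_drop_append_take_mod]
      rfl

lemma cycEq_refl (v : FreeMonoid Bool) : CycEqWord v v :=
  (cycEq_iff_isRotated v v).mpr (List.IsRotated.refl _)

lemma cycEq_symm {v w : FreeMonoid Bool} (h : CycEqWord v w) : CycEqWord w v :=
  (cycEq_iff_isRotated w v).mpr ((cycEq_iff_isRotated v w).mp h).symm

lemma cycEq_trans {u v w : FreeMonoid Bool} (h1 : CycEqWord u v) (h2 : CycEqWord v w) :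
    CycEqWord u w :=
  (cycEq_iff_isRotated u w).mpr
    (((cycEq_iff_isRotated u v).mp h1).trans ((cycEq_iff_isRotated v w).mp h2))

lemma cycEq_mul_comm (v a b : FreeMonoid Bool) :
    CycEqWord v (a * b) ↔ CycEqWord v (b * a) := by
  have h : CycEqWord (a * b) (b * a) := ⟨a, b, rfl, rfl⟩
  exact ⟨fun hv => cycEq_trans hv h, fun hv => cycEq_trans hv (cycEq_symm h)⟩

section Rep

local instance rotSetoid : Setoid (List Bool) := List.IsRotated.setoid Bool

/-- A representative of the cyclic equivalence class of a word. -/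
noncomputable def repW (w : FreeMonoid Bool) : FreeMonoid Bool :=
  FreeMonoid.ofList (Quotient.mk rotSetoid (FreeMonoid.toList w)).out

lemma cycEq_repW (w : FreeMonoid Bool) : CycEqWord w (repW w) := by
  rw [cycEq_iff_isRotated]
  exact (Quotient.mk_out (s := rotSetoid) (FreeMonoid.toList w)).symm

lemma repW_eq_iff (v w : FreeMonoid Bool) : repW v = repW w ↔ CycEqWord v w := by
  unfold repW
  rw [EmbeddingLike.apply_eq_iff_eq, Quotient.out_inj, Quotient.eq, cycEq_iff_isRotated]
  rfl

lemma repW_idem (w : FreeMonoid Bool) : repW (repW w) = repW w := by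
  unfold repW
  rw [FreeMonoid.toList_ofList, Quotient.out_eq]

end Rep

/-- The linear functional summing coefficients over the cyclic class of `v`. -/
noncomputable def phi (v : FreeMonoid Bool) : NCPoly →ₗ[ℝ] ℝ :=
  (Finsupp.lsum ℝ fun w => if CycEqWord v w then (LinearMap.id : ℝ →ₗ[ℝ] ℝ) else 0) ∘ₗ
    (MonoidAlgebra.coeffLinearEquiv ℝ).toLinearMap

lemma phi_single (v w : FreeMonoid Bool) (c : ℝ) :
    phi v (MonoidAlgebra.single w c) = if CycEqWord v w then c else 0 := by
  show Finsupp.sum (Finsupp.single w c) _ = _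
  rw [Finsupp.sum_single_index]
  · split_ifs with h
    · simp only [if_pos h]; rfl
    · simp only [if_neg h]; rfl
  · simp

lemma phi_eq (v : FreeMonoid Bool) (x : NCPoly) :
    phi v x = ∑ w ∈ x.coeff.support.filter (fun w => CycEqWord v w), x.coeff w := by
  rw [Finset.sum_filter]
  show Finsupp.sum _ _ = _
  rw [Finsupp.sum]
  refine Finset.sum_congr rfl fun w _ => ?_
  split_ifs with h
  · simp only [if_pos h]; rfl
  · simp only [if_neg h]; rfl

lemma phi_mul (v : FreeMonoid Bool) (x y : NCPoly) :
    phi v (x * y) = ∑ a ∈ x.coeff.support, ∑ b ∈ y.coeff.support,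
      x.coeff a * y.coeff b * (if CycEqWord v (a * b) then 1 else 0) := by
  rw [MonoidAlgebra.mul_def, Finsupp.sum, map_sum]
  refine Finset.sum_congr rfl fun a _ => ?_
  rw [Finsupp.sum, map_sum]
  refine Finset.sum_congr rfl fun b _ => ?_
  rw [phi_single]
  split_ifs <;> simp

lemma phi_mul_comm (v : FreeMonoid Bool) (p q : NCPoly) :
    phi v (p * q) = phi v (q * p) := by
  rw [phi_mul, phi_mul, Finset.sum_comm]
  refine Finset.sum_congr rfl fun b _ => Finset.sum_congr rfl fun a _ => ?_
  rw [if_congr (cycEq_mul_comm v a b) rfl rfl]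
  ring

/-- The span of commutators. -/
noncomputable def K : Submodule ℝ NCPoly :=
  Submodule.span ℝ {x : NCPoly | ∃ p q : NCPoly, x = p * q - q * p}

lemma sum_comm_iff_mem_K (x : NCPoly) :
    (∃ (n : ℕ) (p q : Fin n → NCPoly), x = ∑ i, (p i * q i - q i * p i)) ↔ x ∈ K := by
  constructor
  · rintro ⟨n, p, q, rfl⟩
    exact Submodule.sum_mem _ fun i _ => Submodule.subset_span ⟨p i, q i, rfl⟩
  · intro hx
    induction hx using Submodule.span_induction with
    | mem y hy =>
        obtain ⟨p, q, rfl⟩ := hy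
        exact ⟨1, fun _ => p, fun _ => q, by simp⟩
    | zero => exact ⟨0, ![], ![], by simp⟩
    | add y z _ _ hy hz =>
        obtain ⟨n, p, q, rfl⟩ := hy
        obtain ⟨m, p', q', rfl⟩ := hz
        exact ⟨n + m, Fin.append p p', Fin.append q q', by
          rw [Fin.sum_univ_add]
          simp [Fin.append_left, Fin.append_right]⟩
    | smul c y _ hy =>
        obtain ⟨n, p, q, rfl⟩ := hy
        refine ⟨n, fun i => c • p i, q, ?_⟩
        rw [Finset.smul_sum]
        exact Finset.sum_congr rfl fun i _ => by
          rw [smul_sub, smul_mul_assoc, mul_smul_comm]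

lemma phi_vanish {x : NCPoly} (hx : x ∈ K) (v : FreeMonoid Bool) : phi v x = 0 := by
  induction hx using Submodule.span_induction with
  | mem y hy =>
      obtain ⟨p, q, rfl⟩ := hy
      rw [map_sub, phi_mul_comm, sub_self]
  | zero => exact map_zero _
  | add y z _ _ hy hz => rw [map_add, hy, hz, add_zero]
  | smul c y _ hy => rw [map_smul, hy, smul_zero]

lemma single_sub_single_mem {v w : FreeMonoid Bool} (h : CycEqWord v w) :
    (MonoidAlgebra.single w 1 - MonoidAlgebra.single v 1 : NCPoly) ∈ K := by
  obtain ⟨a, b, rfl, rfl⟩ := h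
  apply Submodule.subset_span
  refine ⟨MonoidAlgebra.single b 1, MonoidAlgebra.single a 1, ?_⟩
  rw [MonoidAlgebra.single_mul_single, MonoidAlgebra.single_mul_single, one_mul]

lemma mem_K_of_phi_zero {h : NCPoly} (hphi : ∀ v, phi v h = 0) : h ∈ K := by
  set h' : NCPoly := ∑ w ∈ h.coeff.support, h.coeff w • (MonoidAlgebra.single (repW w) 1) with hh'
  have hrep : h - h' ∈ K := by
    have hsplit : h - h' =
        ∑ w ∈ h.coeff.support, h.coeff w • (MonoidAlgebra.single w 1 - MonoidAlgebra.single (repW w) 1) := by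
      have h1 : h = ∑ w ∈ h.coeff.support, h.coeff w • (MonoidAlgebra.single w 1 : NCPoly) := by
        conv_lhs => rw [← MonoidAlgebra.sum_coeff_single h]
        rw [Finsupp.sum]
        exact Finset.sum_congr rfl fun w _ => by
          rw [MonoidAlgebra.smul_single, smul_eq_mul, mul_one]
      calc h - h' = ∑ w ∈ h.coeff.support,
            (h.coeff w • (MonoidAlgebra.single w 1 : NCPoly) - h.coeff w • (MonoidAlgebra.single (repW w) 1 : NCPoly)) := by
              rw [Finset.sum_sub_distrib, ← h1, hh']
        _ = _ := Finset.sum_congr rfl fun w _ => (smul_sub _ _ _).symm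
    rw [hsplit]
    exact Submodule.sum_mem _ fun w _ =>
      Submodule.smul_mem _ _ (single_sub_single_mem (cycEq_symm (cycEq_repW w)))
  have hfix : ∀ u, repW u ≠ u → h'.coeff u = 0 := by
    intro u hu
    rw [hh', MonoidAlgebra.coeff_sum, Finsupp.finset_sum_apply]
    refine Finset.sum_eq_zero fun w _ => ?_
    rw [MonoidAlgebra.coeff_smul, Finsupp.smul_apply, MonoidAlgebra.coeff_single, Finsupp.single_apply]
    rcases eq_or_ne (repW w) u with he | he
    · subst he
      exact absurd (repW_idem w) hu
    · rw [if_neg he, smul_zero]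
  have hphi' : ∀ v, phi v h' = 0 := by
    intro v
    have h2 := phi_vanish hrep v
    rw [map_sub, hphi v, zero_sub, neg_eq_zero] at h2
    exact h2
  have hzero : h' = 0 := by
    ext u
    simp only [MonoidAlgebra.coeff_zero, Finsupp.coe_zero, Pi.zero_apply]
    by_cases hu : repW u = u
    · have hkey : phi u h' = h'.coeff u := by
        rw [phi_eq]
        have hfil : h'.coeff.support.filter (fun w => CycEqWord u w)
            = h'.coeff.support.filter (fun w => w = u) := by
          apply Finset.filter_congr
          intro w hw
          have hw' : repW w = w := by
            by_contra hc
            exact (Finsupp.mem_support_iff.mp hw) (hfix w hc)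
          constructor
          · intro hcyc
            have := (repW_eq_iff u w).mpr hcyc
            rw [hu, hw'] at this
            exact this.symm
          · rintro rfl
            exact cycEq_refl _
        rw [hfil, Finset.sum_filter, Finset.sum_ite_eq' h'.coeff.support u]
        by_cases hmem : u ∈ h'.coeff.support
        · rw [if_pos hmem]
        · rw [if_neg hmem, Finsupp.notMem_support_iff.mp hmem]
      rw [← hkey, hphi' u]
    · exact hfix u hu
  have : h = h - h' := by rw [hzero, sub_zero]
  rw [this]
  exact hrep

/-- Two polynomials `f, g ∈ ℝ⟨X,Y⟩` have, for every word `v`, equal sums of coefficients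
over the words cyclically equivalent to `v`, iff `f - g` is a sum of commutators. -/
theorem cycEq_iff_sum_commutators (f g : NCPoly) :
    (∀ v : FreeMonoid Bool,
        ∑ w ∈ f.coeff.support.filter (fun w => CycEqWord v w), f.coeff w =
          ∑ w ∈ g.coeff.support.filter (fun w => CycEqWord v w), g.coeff w) ↔
      ∃ (n : ℕ) (p q : Fin n → NCPoly),
        f - g = ∑ i, (p i * q i - q i * p i) := by
  constructor
  · intro hv
    refine (sum_comm_iff_mem_K _).mpr (mem_K_of_phi_zero fun v => ?_)
    rw [map_sub, sub_eq_zero, phi_eq, phi_eq]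
    exact hv v
  · intro hx v
    have h0 := phi_vanish ((sum_comm_iff_mem_K _).mp hx) v
    rw [map_sub, sub_eq_zero, phi_eq, phi_eq] at h0
    exact h0
end

section
/- For all m ∈ ℕ with 0 ≤ k ≤ 2 or m−2 ≤ k ≤ m, and all positive semidefinite real matrices A, B of the same size, every word of length m in A, B with exactly k occurrences of B has nonnegative trace; hence tr(S_{m,k}(A,B)) ≥ 0. -/
/-- All words of length `m` in the alphabet {A = false, B = true} with exactly `k`
occurrences of `B`. -/
def wordsMK (m k : ℕ) : Finset (List Bool) :=
  (((Finset.univ : Finset (Fin m → Bool)).image fun f => List.ofFn f).filter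
    fun w => w.count true = k)

/-- Evaluation of a word: replace `false` by `A`, `true` by `B`, and multiply. -/
def evalWord {n : ℕ} (A B : Matrix (Fin n) (Fin n) ℝ) (w : List Bool) :
    Matrix (Fin n) (Fin n) ℝ :=
  (w.map fun b => if b then B else A).prod

lemma trace_nonneg_of_psd {n : ℕ} {M : Matrix (Fin n) (Fin n) ℝ} (hM : M.PosSemidef) :
    0 ≤ M.trace := by
  rw [Matrix.trace]
  apply Finset.sum_nonneg
  intro i _
  have := hM.2 (Finsupp.single i 1)
  simpa [dotProduct, Matrix.mulVec, Pi.single_apply, Matrix.diag] using this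

lemma trace_mul_nonneg_of_psd {n : ℕ} {M N : Matrix (Fin n) (Fin n) ℝ}
    (hM : M.PosSemidef) (hN : N.PosSemidef) : 0 ≤ (M * N).trace := by
  obtain ⟨C, rfl⟩ : ∃ C : Matrix (Fin n) (Fin n) ℝ, M = star C * C := by
    open scoped MatrixOrder in
    exact CStarAlgebra.nonneg_iff_eq_star_mul_self.mp hM.nonneg
  rw [Matrix.mul_assoc, Matrix.trace_mul_comm]
  exact trace_nonneg_of_psd (by simpa [Matrix.mul_assoc, Matrix.star_eq_conjTranspose] using hN.mul_mul_conjTranspose_same C)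

lemma trace_rotate {n : ℕ} (A B : Matrix (Fin n) (Fin n) ℝ) (u v : List Bool) :
    (evalWord A B (u ++ v)).trace = (evalWord A B (v ++ u)).trace := by
  simp only [evalWord, List.map_append, List.prod_append]
  exact Matrix.trace_mul_comm _ _

lemma split_zero (w : List Bool) (h : w.count true = 0) :
    w = List.replicate w.length false := by
  apply List.eq_replicate_of_mem
  intro b hb
  cases b
  · rfl
  · exact absurd (List.count_eq_zero.mp h hb) (fun _ => by simp_all)

lemma split_succ (w : List Bool) (k : ℕ) (h : w.count true = k + 1) :
    ∃ p t, w = List.replicate p false ++ true :: t ∧ t.count true = k := by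
  induction w with
  | nil => simp at h
  | cons b w ih =>
    cases b with
    | true =>
      refine ⟨0, w, rfl, ?_⟩
      simpa [List.count_cons] using h
    | false =>
      obtain ⟨p, t, rfl, ht⟩ := ih (by simpa [List.count_cons] using h)
      exact ⟨p + 1, t, by simp [List.replicate_succ], ht⟩

lemma key_trace_nonneg {n : ℕ} (A B : Matrix (Fin n) (Fin n) ℝ)
    (hA : A.PosSemidef) (hB : B.PosSemidef)
    (w : List Bool) (h : w.count true ≤ 2) : 0 ≤ (evalWord A B w).trace := by
  interval_cases hc : (w.count true)
  · rw [split_zero w hc]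
    have : evalWord A B (List.replicate w.length false) = A ^ w.length := by
      simp [evalWord]
    rw [this]
    exact trace_nonneg_of_psd (hA.pow _)
  · obtain ⟨p, t, rfl, ht⟩ := split_succ w 0 hc
    rw [trace_rotate]
    rw [split_zero t ht]
    have : evalWord A B ((true :: List.replicate t.length false) ++ List.replicate p false)
        = B * A ^ (t.length + p) := by
      simp [evalWord, Matrix.mul_assoc]
    rw [this]
    exact trace_mul_nonneg_of_psd hB (hA.pow _)
  · obtain ⟨p, t, rfl, ht⟩ := split_succ w 1 hc
    obtain ⟨q, s, rfl, hs⟩ := split_succ t 0 ht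
    rw [trace_rotate, split_zero s hs]
    have : evalWord A B ((true :: (List.replicate q false ++ true :: List.replicate s.length false)) ++ List.replicate p false)
        = (B * A ^ q * B) * A ^ (s.length + p) := by
      simp [evalWord, Matrix.mul_assoc]
    rw [this]
    have h1 : (B * A ^ q * B).PosSemidef := by
      have := (hA.pow q).conjTranspose_mul_mul_same B
      rwa [hB.1] at this
    exact trace_mul_nonneg_of_psd h1 (hA.pow _)

lemma evalWord_map_not {n : ℕ} (A B : Matrix (Fin n) (Fin n) ℝ) (w : List Bool) :
    evalWord B A (w.map not) = evalWord A B w := by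
  induction w with
  | nil => rfl
  | cons b w ih =>
    cases b <;> simp only [evalWord, List.map_cons, List.prod_cons, Bool.not_true,
      Bool.not_false, if_true, if_false] at ih ⊢ <;> rw [← ih] <;> rfl

lemma count_map_not (w : List Bool) :
    (w.map not).count true + w.count true = w.length := by
  induction w with
  | nil => rfl
  | cons b w ih =>
    cases b <;> simp [List.count_cons, ih] <;> omega

/-- If `0 ≤ k ≤ 2` or `m − 2 ≤ k ≤ m`, then for positive semidefinite real `A`, `B`,
every word of length `m` in `A`, `B` with exactly `k` occurrences of `B` has nonnegative
trace; hence `tr(S_{m,k}(A,B)) ≥ 0`. -/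
theorem trace_words_nonneg_small_k (n m k : ℕ)
    (hk : k ≤ 2 ∨ (m ≤ k + 2 ∧ k ≤ m))
    (A B : Matrix (Fin n) (Fin n) ℝ) (hA : A.PosSemidef) (hB : B.PosSemidef) :
    (∀ w : List Bool, w.length = m → w.count true = k → 0 ≤ (evalWord A B w).trace) ∧
    0 ≤ (∑ w ∈ wordsMK m k, evalWord A B w).trace := by
  have main : ∀ w : List Bool, w.length = m → w.count true = k →
      0 ≤ (evalWord A B w).trace := by
    intro w hlen hcount
    rcases hk with hk | ⟨hk1, hk2⟩
    · exact key_trace_nonneg A B hA hB w (by omega)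
    · rw [← evalWord_map_not]
      have hcm := count_map_not w
      exact key_trace_nonneg B A hB hA (w.map not) (by omega)
  refine ⟨main, ?_⟩
  rw [Matrix.trace_sum]
  apply Finset.sum_nonneg
  intro w hw
  simp only [wordsMK, Finset.mem_filter, Finset.mem_image] at hw
  obtain ⟨⟨f, _, rfl⟩, hcount⟩ := hw
  exact main _ (List.length_ofFn (f := f)) hcount
end
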